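/- Let G be a properly edge-coloured graph with n vertices and at least n·d edges, and let k be an integer with 1 ≤ k < d/8. Then G contains at least n·(d/4)^k labelled rainbow paths with k edges (a labelled rainbow path is a sequence of k+1 distinct vertices, consecutive ones adjacent, with all k edge colours distinct). -/

import Mathlib

open Finset Function

set_option linter.unusedSectionVars false
set_option maxHeartbeats 1000000

section lemmasForStmt
variable {V K : Type*} [Fintype V] [DecidableEq V] (G : SimpleGraph V) [DecidableRel G.Adj]
  (c : Sym2 V → K)


def degS (S : Finset V) (v : V) : ℕ := (S.filter (fun u => G.Adj v u)).card

def DD (S : Finset V) : ℕ := ∑ v ∈ S, degS G S v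

lemma DD_erase (S : Finset V) (v : V) (hv : v ∈ S) :
    DD G S ≤ DD G (S.erase v) + 2 * degS G S v := by
  have h2 : ∀ u ∈ S.erase v,
      degS G S u ≤ degS G (S.erase v) u + (if G.Adj u v then 1 else 0) := by
    intro u hu
    by_cases h : G.Adj u v
    · have hsub : S.filter (fun w => G.Adj u w) ⊆
          insert v ((S.erase v).filter (fun w => G.Adj u w)) := by
        intro x hx
        simp only [mem_filter, mem_insert, mem_erase] at hx ⊢
        rcases eq_or_ne x v with rfl | hne
        · exact Or.inl rfl
        · exact Or.inr ⟨⟨hne, hx.1⟩, hx.2⟩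
      have := (Finset.card_le_card hsub).trans (Finset.card_insert_le _ _)
      simpa [degS, h] using this
    · have hsub : S.filter (fun w => G.Adj u w) ⊆
          (S.erase v).filter (fun w => G.Adj u w) := by
        intro x hx
        simp only [mem_filter, mem_erase] at hx ⊢
        refine ⟨⟨?_, hx.1⟩, hx.2⟩
        rintro rfl; exact h hx.2
      simpa [degS, h] using Finset.card_le_card hsub
  have h3 : ∑ u ∈ S.erase v, (if G.Adj u v then 1 else 0) ≤ degS G S v := by
    rw [← Finset.card_filter]
    apply Finset.card_le_card
    intro x hx
    simp only [mem_filter, mem_erase] at hx ⊢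
    exact ⟨hx.1.2, hx.2.symm⟩
  calc DD G S = degS G S v + ∑ u ∈ S.erase v, degS G S u := by
        rw [DD, ← Finset.add_sum_erase _ _ hv]
    _ ≤ degS G S v + ∑ u ∈ S.erase v, (degS G (S.erase v) u + (if G.Adj u v then 1 else 0)) := by
        gcongr with u hu; exact h2 u hu
    _ = degS G S v + (DD G (S.erase v) + ∑ u ∈ S.erase v, (if G.Adj u v then 1 else 0)) := by
        rw [Finset.sum_add_distrib]; rfl
    _ ≤ degS G S v + (DD G (S.erase v) + degS G S v) := by gcongr
    _ = DD G (S.erase v) + 2 * degS G S v := by ring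

lemma exists_good (d : ℝ) (hd : 0 ≤ d)
    (h2 : (Fintype.card V : ℝ) * d * 2 ≤ DD G Finset.univ) :
    ∃ S : Finset V, (∀ v ∈ S, d / 2 ≤ (degS G S v : ℝ)) ∧
      (Fintype.card V : ℝ) * d ≤ DD G S := by
  classical
  set n : ℕ := Fintype.card V with hn
  set T : Finset (Finset V) :=
    Finset.univ.filter (fun S : Finset V => (n : ℝ) * d + d * S.card ≤ DD G S) with hT
  have hTuniv : (Finset.univ : Finset V) ∈ T := by
    simp only [hT, mem_filter, mem_univ, true_and]
    have : ((Finset.univ : Finset V).card : ℝ) = n := by simp [hn]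
    rw [this]; nlinarith [h2]
  obtain ⟨S, hST, hSmin⟩ := Finset.exists_min_image T Finset.card ⟨_, hTuniv⟩
  have hSprop : (n : ℝ) * d + d * S.card ≤ DD G S := by
    simpa [hT] using hST
  refine ⟨S, ?_, ?_⟩
  · intro v hv
    by_contra hlow
    push_neg at hlow
    have hseT : S.erase v ∈ T := by
      simp only [hT, mem_filter, mem_univ, true_and]
      have hcard : ((S.erase v).card : ℝ) = (S.card : ℝ) - 1 := by
        rw [Finset.card_erase_of_mem hv]
        have : 1 ≤ S.card := Finset.card_pos.mpr ⟨v, hv⟩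
        push_cast [Nat.cast_sub this]; ring
      have hDN : (DD G S : ℝ) ≤ DD G (S.erase v) + 2 * degS G S v := by
        exact_mod_cast DD_erase G S v hv
      rw [hcard]; nlinarith
    have := hSmin _ hseT
    have hlt : (S.erase v).card < S.card := Finset.card_erase_lt_of_mem hv
    omega
  · nlinarith [mul_nonneg hd (Nat.cast_nonneg (α := ℝ) S.card)]

noncomputable def PF (S : Finset V) (i : ℕ) : Finset (Fin (i + 1) → V) :=
  @Finset.filter _ (fun p => (∀ j, p j ∈ S) ∧ Function.Injective p ∧
      (∀ j : Fin i, G.Adj (p j.castSucc) (p j.succ)) ∧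
      Function.Injective (fun j : Fin i => c s(p j.castSucc, p j.succ)))
    (Classical.decPred _) Finset.univ

lemma mem_PF {S : Finset V} {i : ℕ} {p : Fin (i + 1) → V} :
    p ∈ PF G c S i ↔ (∀ j, p j ∈ S) ∧ Function.Injective p ∧
      (∀ j : Fin i, G.Adj (p j.castSucc) (p j.succ)) ∧
      Function.Injective (fun j : Fin i => c s(p j.castSucc, p j.succ)) := by
  simp [PF]


lemma PF_step (hproper : ∀ u v w : V, G.Adj u v → G.Adj u w → v ≠ w → c s(u, v) ≠ c s(u, w))
    (S : Finset V) (d : ℝ) (hS : ∀ v ∈ S, d / 2 ≤ (degS G S v : ℝ)) (i : ℕ)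
    (hi : (2 * i + 1 : ℝ) ≤ d / 4) :
    d / 4 * (PF G c S i).card ≤ ((PF G c S (i + 1)).card : ℝ) := by
  classical
  set ext : (Fin (i + 1) → V) → Finset V := fun q =>
    ((S.filter (fun v => G.Adj (q (Fin.last i)) v)) \ (Finset.image q Finset.univ)) \
      ((S.filter (fun v => G.Adj (q (Fin.last i)) v)).filter
        (fun v => ∃ j : Fin i, c s(q (Fin.last i), v) = c s(q j.castSucc, q j.succ)))
    with hext
  -- fiber lower bound
  have hfib : ∀ q ∈ PF G c S i, d / 4 ≤ ((ext q).card : ℝ) := by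
    intro q hq
    rw [mem_PF] at hq
    obtain ⟨hqS, hqinj, hqadj, hqcol⟩ := hq
    set N := S.filter (fun v => G.Adj (q (Fin.last i)) v) with hN
    have hNcard : d / 2 ≤ (N.card : ℝ) := hS _ (hqS (Fin.last i))
    set bad1 := Finset.image q Finset.univ with hbad1
    set bad2 := N.filter
        (fun v => ∃ j : Fin i, c s(q (Fin.last i), v) = c s(q j.castSucc, q j.succ)) with hbad2
    have hb1 : bad1.card ≤ i + 1 := by
      calc bad1.card ≤ (Finset.univ : Finset (Fin (i + 1))).card := Finset.card_image_le
        _ = i + 1 := by simp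
    have hb2 : bad2.card ≤ i := by
      have key := Finset.card_le_card_of_injOn
        (f := fun v => c s(q (Fin.last i), v))
        (s := bad2)
        (t := Finset.image (fun j : Fin i => c s(q j.castSucc, q j.succ)) Finset.univ)
        ?_ ?_
      · calc bad2.card ≤ _ := key
          _ ≤ (Finset.univ : Finset (Fin i)).card := Finset.card_image_le
          _ = i := by simp
      · intro v hv
        simp only [Finset.mem_coe, hbad2, hN, mem_filter] at hv
        obtain ⟨-, j, hj⟩ := hv
        exact Finset.mem_image.mpr ⟨j, Finset.mem_univ _, hj.symm⟩
      · intro v hv w hw hvw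
        simp only [hbad2, hN, Finset.coe_filter, Set.mem_setOf_eq, mem_filter] at hv hw
        by_contra hne
        exact hproper (q (Fin.last i)) v w hv.1.2 hw.1.2 hne hvw
    have hsub : N ⊆ (ext q) ∪ bad2 ∪ bad1 := by
      intro x hx
      simp only [Finset.mem_union]
      by_cases h1 : x ∈ bad1
      · exact Or.inr h1
      by_cases h2 : x ∈ bad2
      · exact Or.inl (Or.inr h2)
      refine Or.inl (Or.inl ?_)
      exact Finset.mem_sdiff.mpr ⟨Finset.mem_sdiff.mpr ⟨hx, h1⟩, h2⟩
    have hcards : N.card ≤ (ext q).card + bad2.card + bad1.card := by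
      calc N.card ≤ ((ext q) ∪ bad2 ∪ bad1).card := Finset.card_le_card hsub
        _ ≤ ((ext q) ∪ bad2).card + bad1.card := Finset.card_union_le _ _
        _ ≤ (ext q).card + bad2.card + bad1.card := by
            have := Finset.card_union_le (ext q) bad2; omega
    have hfin : (N.card : ℝ) ≤ (ext q).card + i + (i + 1) := by
      have h2' : (bad2.card : ℝ) ≤ i := by exact_mod_cast hb2
      have h1' : (bad1.card : ℝ) ≤ i + 1 := by exact_mod_cast hb1
      have hc' : (N.card : ℝ) ≤ (ext q).card + bad2.card + bad1.card := by exact_mod_cast hcards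
      linarith
    linarith
  -- the injection from sigma into PF (i+1)
  have hinj : ((PF G c S i).sigma (fun q => ext q)).card ≤ (PF G c S (i + 1)).card := by
    apply Finset.card_le_card_of_injOn (fun x => Fin.snoc x.1 x.2)
    · rintro ⟨q, v⟩ hx
      simp only [Finset.mem_coe, Finset.mem_sigma] at hx
      obtain ⟨hq, hv⟩ := hx
      rw [mem_PF] at hq
      obtain ⟨hqS, hqinj, hqadj, hqcol⟩ := hq
      rw [hext] at hv
      simp only [Finset.mem_sdiff, Finset.mem_filter] at hv
      obtain ⟨⟨⟨hvS, hvadj⟩, hvim⟩, hvcol⟩ := hv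
      have hvim' : ∀ j : Fin (i + 1), q j ≠ v := by
        intro j hj
        exact hvim (Finset.mem_image.mpr ⟨j, Finset.mem_univ _, hj⟩)
      have hvcol' : ∀ j : Fin i, c s(q (Fin.last i), v) ≠ c s(q j.castSucc, q j.succ) := by
        intro j hj
        exact hvcol ⟨⟨hvS, hvadj⟩, j, hj⟩
      simp only [Finset.mem_coe]
      rw [mem_PF]
      have hpl : (Fin.snoc q v : Fin (i + 2) → V) (Fin.last (i + 1)) = v := Fin.snoc_last ..
      have hadj : ∀ j : Fin (i + 1),
          G.Adj ((Fin.snoc q v : Fin (i + 2) → V) j.castSucc)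
            ((Fin.snoc q v : Fin (i + 2) → V) j.succ) := by
        intro j
        induction j using Fin.lastCases with
        | last =>
          rw [Fin.succ_last, Fin.snoc_last, Fin.snoc_castSucc]
          exact hvadj
        | cast j' =>
          rw [Fin.succ_castSucc, Fin.snoc_castSucc, Fin.snoc_castSucc]
          exact hqadj j'
      have hcol_eval : ∀ j : Fin (i + 1),
          c s((Fin.snoc q v : Fin (i + 2) → V) j.castSucc,
              (Fin.snoc q v : Fin (i + 2) → V) j.succ) =
          Fin.snoc (α := fun _ => K) (fun j' : Fin i => c s(q j'.castSucc, q j'.succ))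
            (c s(q (Fin.last i), v)) j := by
        intro j
        induction j using Fin.lastCases with
        | last =>
          rw [Fin.succ_last, Fin.snoc_last, Fin.snoc_castSucc, Fin.snoc_last]
        | cast j' =>
          rw [Fin.succ_castSucc, Fin.snoc_castSucc, Fin.snoc_castSucc, Fin.snoc_castSucc]
      refine ⟨?_, ?_, hadj, ?_⟩
      · intro j
        induction j using Fin.lastCases with
        | last => rw [Fin.snoc_last]; exact hvS
        | cast j' => rw [Fin.snoc_castSucc]; exact hqS j'
      · intro a b hab
        induction a using Fin.lastCases with
        | last =>
          induction b using Fin.lastCases with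
          | last => rfl
          | cast b' =>
            rw [Fin.snoc_last, Fin.snoc_castSucc] at hab
            exact absurd hab.symm (hvim' b')
        | cast a' =>
          induction b using Fin.lastCases with
          | last =>
            rw [Fin.snoc_last, Fin.snoc_castSucc] at hab
            exact absurd hab (hvim' a')
          | cast b' =>
            rw [Fin.snoc_castSucc, Fin.snoc_castSucc] at hab
            rw [hqinj hab]
      · intro a b hab
        simp only [hcol_eval] at hab
        induction a using Fin.lastCases with
        | last =>
          induction b using Fin.lastCases with
          | last => rfl
          | cast b' =>
            rw [Fin.snoc_last, Fin.snoc_castSucc] at hab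
            exact absurd hab (hvcol' b')
        | cast a' =>
          induction b using Fin.lastCases with
          | last =>
            rw [Fin.snoc_last, Fin.snoc_castSucc] at hab
            exact absurd hab.symm (hvcol' a')
          | cast b' =>
            rw [Fin.snoc_castSucc, Fin.snoc_castSucc] at hab
            rw [hqcol hab]
    · rintro ⟨q, v⟩ hx ⟨q', v'⟩ hy h
      simp only at h
      have h1 : q = q' := by
        have := congrArg Fin.init h
        rwa [Fin.init_snoc, Fin.init_snoc] at this
      have h2 : v = v' := by
        have := congrFun h (Fin.last (i + 1))
        rwa [Fin.snoc_last, Fin.snoc_last] at this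
      subst h1; subst h2; rfl
  -- combine
  have hsum : d / 4 * (PF G c S i).card ≤
      (((PF G c S i).sigma (fun q => ext q)).card : ℝ) := by
    rw [Finset.card_sigma]
    push_cast
    have := Finset.card_nsmul_le_sum (PF G c S i)
      (fun q => ((ext q).card : ℝ)) (d / 4) hfib
    simpa [nsmul_eq_mul, mul_comm] using this
  calc d / 4 * (PF G c S i).card ≤ _ := hsum
    _ ≤ _ := by exact_mod_cast hinj

lemma PF_base (S : Finset V) : DD G S ≤ (PF G c S 1).card := by
  classical
  have : DD G S = (S.sigma (fun v => S.filter (fun u => G.Adj v u))).card := by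
    rw [Finset.card_sigma]; rfl
  rw [this]
  apply Finset.card_le_card_of_injOn (fun x => ![x.1, x.2])
  · rintro ⟨v, u⟩ hx
    simp only [Finset.mem_coe, Finset.mem_sigma, mem_filter] at hx
    obtain ⟨hv, hu, hadj⟩ := hx
    rw [Finset.mem_coe, mem_PF]
    refine ⟨?_, ?_, ?_, ?_⟩
    · intro j; fin_cases j <;> simpa
    · intro a b hab
      fin_cases a <;> fin_cases b <;> simp_all
    · intro j
      fin_cases j
      simpa using hadj
    · exact Function.injective_of_subsingleton _
  · rintro ⟨v, u⟩ hx ⟨v', u'⟩ hy h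
    have h0 := congrFun h 0
    have h1 := congrFun h 1
    simp at h0 h1
    simp [h0, h1]


end lemmasForStmt

/-- A properly edge-coloured graph with `n` vertices and at least `n·d` edges,
with `1 ≤ k < d/8`, contains at least `n·(d/4)^k` labelled rainbow paths with `k` edges. -/
theorem stmt_1 {V K : Type*} [Fintype V]
    (G : SimpleGraph V) (c : Sym2 V → K)
    (hproper : ∀ u v w : V, G.Adj u v → G.Adj u w → v ≠ w → c s(u, v) ≠ c s(u, w))
    (n : ℕ) (hn : n = Fintype.card V) (d : ℝ)
    (hedges : (n : ℝ) * d ≤ Nat.card G.edgeSet)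
    (k : ℕ) (hk1 : 1 ≤ k) (hk2 : (k : ℝ) < d / 8) :
    (n : ℝ) * (d / 4) ^ k ≤
      Nat.card {p : Fin (k + 1) → V //
        Function.Injective p ∧
        (∀ i : Fin k, G.Adj (p i.castSucc) (p i.succ)) ∧
        Function.Injective (fun i : Fin k => c s(p i.castSucc, p i.succ))} := by
  classical
  have hk1' : (1 : ℝ) ≤ (k : ℝ) := by exact_mod_cast hk1
  have hd8 : (8 : ℝ) < d := by linarith
  have hd : (0 : ℝ) ≤ d := by linarith
  -- sum of degrees equals twice the number of edges
  have hdeg_eq : ∀ v : V, degS G (Finset.univ) v = G.degree v := by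
    intro v
    rw [degS, ← SimpleGraph.card_neighborFinset_eq_degree]
    congr 1
    ext u
    simp [SimpleGraph.mem_neighborFinset]
  have hDDuniv : DD G (Finset.univ : Finset V) = 2 * Nat.card G.edgeSet := by
    rw [DD]
    simp only [hdeg_eq]
    rw [SimpleGraph.sum_degrees_eq_twice_card_edges, Nat.card_eq_fintype_card,
      SimpleGraph.edgeFinset_card]
  have hDD : (Fintype.card V : ℝ) * d * 2 ≤ (DD G (Finset.univ : Finset V) : ℝ) := by
    rw [hDDuniv]
    push_cast
    rw [← hn]
    nlinarith
  obtain ⟨S, hSdeg, hSD⟩ := exists_good G d hd hDD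
  rw [← hn] at hSD
  -- the inductive lower bound on the number of rainbow paths within S
  have key : ∀ i : ℕ, 1 ≤ i → i ≤ k → (n : ℝ) * (d / 4) ^ i ≤ ((PF G c S i).card : ℝ) := by
    intro i
    induction i with
    | zero => omega
    | succ i ih =>
      intro _ hik
      rcases Nat.eq_zero_or_pos i with rfl | hipos
      · -- base case : paths with one edge
        have hb := PF_base G c S
        have hb' : (DD G S : ℝ) ≤ ((PF G c S 1).card : ℝ) := by exact_mod_cast hb
        have hnd : (n : ℝ) * (d / 4) ^ 1 ≤ (n : ℝ) * d := by
          have hn0 : (0 : ℝ) ≤ (n : ℝ) := Nat.cast_nonneg n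
          rw [pow_one]
          nlinarith
        linarith
      · -- inductive step
        have hik' : i ≤ k := by omega
        have hikR : (i : ℝ) ≤ (k : ℝ) - 1 := by
          have : i + 1 ≤ k := hik
          have : (i : ℝ) + 1 ≤ (k : ℝ) := by exact_mod_cast this
          linarith
        have hi4 : (2 * (i : ℝ) + 1 : ℝ) ≤ d / 4 := by linarith
        have hstep := PF_step G c hproper S d hSdeg i hi4
        have hih := ih hipos hik'
        have hd4 : (0 : ℝ) ≤ d / 4 := by linarith
        calc (n : ℝ) * (d / 4) ^ (i + 1) = d / 4 * ((n : ℝ) * (d / 4) ^ i) := by ring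
          _ ≤ d / 4 * ((PF G c S i).card : ℝ) := by
              exact mul_le_mul_of_nonneg_left hih hd4
          _ ≤ ((PF G c S (i + 1)).card : ℝ) := hstep
  have hkey := key k hk1 le_rfl
  -- relate `PF G c S k` to the subtype in the statement
  have hcard : ((PF G c S k).card : ℝ) ≤
      (Nat.card {p : Fin (k + 1) → V //
        Function.Injective p ∧
        (∀ i : Fin k, G.Adj (p i.castSucc) (p i.succ)) ∧
        Function.Injective (fun i : Fin k => c s(p i.castSucc, p i.succ))} : ℝ) := by
    have heq : Nat.card {p : Fin (k + 1) → V //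
        Function.Injective p ∧
        (∀ i : Fin k, G.Adj (p i.castSucc) (p i.succ)) ∧
        Function.Injective (fun i : Fin k => c s(p i.castSucc, p i.succ))} =
        (Finset.univ.filter (fun p : Fin (k + 1) → V =>
          Function.Injective p ∧
          (∀ i : Fin k, G.Adj (p i.castSucc) (p i.succ)) ∧
          Function.Injective (fun i : Fin k => c s(p i.castSucc, p i.succ)))).card := by
      rw [Nat.card_eq_fintype_card, Fintype.card_subtype]
    rw [heq]
    have hsub : PF G c S k ⊆ Finset.univ.filter (fun p : Fin (k + 1) → V =>
        Function.Injective p ∧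
        (∀ i : Fin k, G.Adj (p i.castSucc) (p i.succ)) ∧
        Function.Injective (fun i : Fin k => c s(p i.castSucc, p i.succ))) := by
      intro p hp
      rw [mem_PF] at hp
      exact Finset.mem_filter.mpr ⟨Finset.mem_univ _, hp.2⟩
    exact_mod_cast Finset.card_le_card hsub
  linarith
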